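/- Farkas' Lemma (affine form over the rationals): Let m, n be natural numbers, let a : Fin m → Fin n → ℚ and b : Fin m → ℚ define a system S of linear inequations { ∑_{j} a i j * x j + b i ≥ 0 : i ∈ Fin m }, and assume S is satisfiable, i.e. there exists x : Fin n → ℚ with ∑_j a i j * x j + b i ≥ 0 for every i. Then for every c : Fin n → ℚ and d : ℚ, the entailment (∀ x : Fin n → ℚ, (∀ i, ∑_j a i j * x j + b i ≥ 0) → ∑_j c j * x j + d ≥ 0) holds if and only if there exists λ : Fin m → ℚ with λ i ≥ 0 for all i, d ≥ ∑_i λ i * b i, and c j = ∑_i λ i * a i j for every j. -/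

import Mathlib

private lemma sub_dot {n : ℕ} (r : ℚ) (u v w : Fin n → ℚ) :
    ∑ j, (u j - r * v j) * w j = (∑ j, u j * w j) - r * ∑ j, v j * w j := by
  rw [Finset.mul_sum, ← Finset.sum_sub_distrib]
  exact Finset.sum_congr rfl fun j _ => by ring

private lemma add_dot {n : ℕ} (t : ℚ) (u y yh : Fin n → ℚ) :
    ∑ j, u j * (y j + t * yh j) = (∑ j, u j * y j) + t * ∑ j, u j * yh j := by
  rw [Finset.mul_sum, ← Finset.sum_add_distrib]
  exact Finset.sum_congr rfl fun j _ => by ring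

theorem farkas_cone : ∀ (m : ℕ) {n : ℕ} (A : Fin m → Fin n → ℚ) (k : Fin n → ℚ),
    (∀ y : Fin n → ℚ, (∀ i, 0 ≤ ∑ j, A i j * y j) → 0 ≤ ∑ j, k j * y j) →
    ∃ mu : Fin m → ℚ, (∀ i, 0 ≤ mu i) ∧ ∀ j, k j = ∑ i, mu i * A i j := by
  intro m
  induction m with
  | zero =>
    intro n A k h
    refine ⟨0, fun i => le_refl 0, fun j => ?_⟩
    have h1 := h (fun j => -k j) (fun i => i.elim0)
    have h2 : ∑ j, k j * (-k j) = -∑ j, k j ^ 2 := by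
      rw [← Finset.sum_neg_distrib]
      exact Finset.sum_congr rfl fun j _ => by ring
    rw [h2] at h1
    have h3 : ∑ j, k j ^ 2 = 0 :=
      le_antisymm (by linarith) (Finset.sum_nonneg fun j _ => sq_nonneg _)
    have h4 : k j ^ 2 = 0 :=
      (Finset.sum_eq_zero_iff_of_nonneg (fun j _ => sq_nonneg (k j))).mp h3 j (Finset.mem_univ j)
    have : k j = 0 := by nlinarith [sq_nonneg (k j)]
    simp [this]
  | succ m ih =>
    intro n A k h
    by_cases hd : ∀ y : Fin n → ℚ, (∀ i : Fin m, 0 ≤ ∑ j, A i.castSucc j * y j) →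
        0 ≤ ∑ j, k j * y j
    · obtain ⟨mu, hmu, hk⟩ := ih (fun i => A i.castSucc) k hd
      refine ⟨Fin.snoc mu 0, fun i => ?_, fun j => ?_⟩
      · refine Fin.lastCases ?_ (fun i => ?_) i <;> simp [hmu]
      · rw [hk j, Fin.sum_univ_castSucc]
        simp
    · push_neg at hd
      obtain ⟨yh, hfeas, hneg⟩ := hd
      have hAm : ∑ j, A (Fin.last m) j * yh j < 0 := by
        by_contra hc
        push_neg at hc
        have := h yh (fun i => Fin.lastCases hc hfeas i)
        linarith
      set D := ∑ j, A (Fin.last m) j * yh j with hDdef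
      have hD0 : D ≠ 0 := ne_of_lt hAm
      set β : Fin m → ℚ := fun i => (∑ j, A i.castSucc j * yh j) / D with hβdef
      set α : ℚ := (∑ j, k j * yh j) / D with hαdef
      have hα : 0 < α := div_pos_of_neg_of_neg hneg hAm
      have hβ : ∀ i, β i ≤ 0 := fun i =>
        div_nonpos_of_nonneg_of_nonpos (hfeas i) (le_of_lt hAm)
      set B : Fin m → Fin n → ℚ := fun i j => A i.castSucc j - β i * A (Fin.last m) j with hBdef
      set k' : Fin n → ℚ := fun j => k j - α * A (Fin.last m) j with hk'def
      have key : ∀ y : Fin n → ℚ, (∀ i : Fin m, 0 ≤ ∑ j, B i j * y j) →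
          0 ≤ ∑ j, k' j * y j := by
        intro y hy
        set t : ℚ := -(∑ j, A (Fin.last m) j * y j) / D with htdef
        set z : Fin n → ℚ := fun j => y j + t * yh j with hzdef
        have hz : ∀ i : Fin (m + 1), 0 ≤ ∑ j, A i j * z j := by
          intro i
          refine Fin.lastCases ?_ (fun i => ?_) i
          · have : ∑ j, A (Fin.last m) j * z j = 0 := by
              rw [hzdef, add_dot, ← hDdef, htdef]
              field_simp
              ring
            rw [this]
          · have hBi := hy i
            rw [hBdef] at hBi
            simp only at hBi
            rw [sub_dot] at hBi
            have : ∑ j, A i.castSucc j * z j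
                = (∑ j, A i.castSucc j * y j) - β i * ∑ j, A (Fin.last m) j * y j := by
              rw [hzdef, add_dot, htdef, hβdef]
              field_simp
              ring
            rw [this]
            exact hBi
        have hkz := h z hz
        have : ∑ j, k' j * y j = ∑ j, k j * z j := by
          rw [hk'def]
          simp only
          rw [sub_dot, hzdef, add_dot, htdef, hαdef]
          field_simp
          ring
        rw [this]
        exact hkz
      obtain ⟨mu, hmu, hk'⟩ := ih B k' key
      refine ⟨Fin.snoc mu (α - ∑ i, mu i * β i), fun i => ?_, fun j => ?_⟩
      · refine Fin.lastCases ?_ (fun i => ?_) i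
        · simp only [Fin.snoc_last]
          have : ∑ i, mu i * β i ≤ 0 :=
            Finset.sum_nonpos fun i _ => mul_nonpos_of_nonneg_of_nonpos (hmu i) (hβ i)
          linarith
        · simp [hmu]
      · rw [Fin.sum_univ_castSucc]
        simp only [Fin.snoc_castSucc, Fin.snoc_last]
        have hBsum : ∑ i, mu i * B i j
            = (∑ i, mu i * A i.castSucc j) - (∑ i, mu i * β i) * A (Fin.last m) j := by
          rw [Finset.sum_mul, ← Finset.sum_sub_distrib]
          refine Finset.sum_congr rfl fun i _ => by rw [hBdef]; ring
        have hkj := hk' j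
        rw [hk'def] at hkj
        simp only at hkj
        rw [hBsum] at hkj
        linarith [hkj]
/-- Farkas' Lemma (affine form over the rationals). -/
theorem farkas_affine (m n : ℕ) (a : Fin m → Fin n → ℚ) (b : Fin m → ℚ)
    (hsat : ∃ x : Fin n → ℚ, ∀ i : Fin m, (∑ j, a i j * x j) + b i ≥ 0)
    (c : Fin n → ℚ) (d : ℚ) :
    (∀ x : Fin n → ℚ, (∀ i : Fin m, (∑ j, a i j * x j) + b i ≥ 0) →
        (∑ j, c j * x j) + d ≥ 0) ↔
    (∃ lam : Fin m → ℚ, (∀ i, lam i ≥ 0) ∧ d ≥ ∑ i, lam i * b i ∧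
        ∀ j : Fin n, c j = ∑ i, lam i * a i j) := by
  constructor
  · intro hent
    obtain ⟨xb, hxb⟩ := hsat
    -- Homogenized system: rows (a i, b i) for i < m, plus row (0, 1); target (c, d).
    set A : Fin (m + 1) → Fin (n + 1) → ℚ :=
      Fin.snoc (fun i => Fin.snoc (a i) (b i)) (Fin.snoc 0 1) with hAdef
    set k : Fin (n + 1) → ℚ := Fin.snoc c d with hkdef
    have hhom : ∀ y : Fin (n + 1) → ℚ, (∀ i, 0 ≤ ∑ j, A i j * y j) →
        0 ≤ ∑ j, k j * y j := by
      intro y hy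
      set x : Fin n → ℚ := fun j => y j.castSucc with hxdef
      set t : ℚ := y (Fin.last n) with htdef
      have hrow : ∀ i : Fin m, 0 ≤ (∑ j, a i j * x j) + b i * t := by
        intro i
        have h := hy i.castSucc
        rw [hAdef, Fin.sum_univ_castSucc] at h
        simp only [Fin.snoc_castSucc, Fin.snoc_last] at h
        simp only [hxdef, htdef]
        exact h
      have ht : 0 ≤ t := by
        have h := hy (Fin.last m)
        rw [hAdef, Fin.sum_univ_castSucc] at h
        simpa [htdef] using h
      have hgoal : 0 ≤ (∑ j, c j * x j) + d * t := by
        rcases lt_or_eq_of_le ht with htpos | ht0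
        · have htne : t ≠ 0 := ne_of_gt htpos
          have hx' : ∀ i : Fin m, (∑ j, a i j * (x j / t)) + b i ≥ 0 := by
            intro i
            have h4 : ∑ j, a i j * (x j / t) = (∑ j, a i j * x j) / t := by
              rw [Finset.sum_div]
              exact Finset.sum_congr rfl fun j _ => by field_simp
            rw [h4, ge_iff_le, div_add' _ _ _ htne]
            exact div_nonneg (hrow i) (le_of_lt htpos)
          have h2 := hent _ hx'
          have h3 : ∑ j, c j * (x j / t) = (∑ j, c j * x j) / t := by
            rw [Finset.sum_div]
            exact Finset.sum_congr rfl fun j _ => by field_simp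
          rw [h3, ge_iff_le] at h2
          have h6 : 0 ≤ t * ((∑ j, c j * x j) / t + d) :=
            mul_nonneg (le_of_lt htpos) h2
          have h7 : t * ((∑ j, c j * x j) / t + d) = (∑ j, c j * x j) + d * t := by
            rw [mul_add]
            rw [mul_div_cancel₀ _ htne]
            ring
          rw [h7] at h6
          exact h6
        · -- t = 0 : unbounded-direction argument
          have ht0' : t = 0 := ht0.symm
          have hdir : ∀ i : Fin m, 0 ≤ ∑ j, a i j * x j := by
            intro i; have h := hrow i; rw [ht0'] at h; simpa using h
          have hcx : 0 ≤ ∑ j, c j * x j := by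
            by_contra hcneg
            push_neg at hcneg
            have hSpos : (0:ℚ) < -(∑ j, c j * x j) := by linarith
            have hS : -(∑ j, c j * x j) ≠ 0 := ne_of_gt hSpos
            have hb := hent xb hxb
            have hnum : (0:ℚ) < (∑ j, c j * xb j) + d + 1 := by linarith
            set s : ℚ := ((∑ j, c j * xb j) + d + 1) / (-(∑ j, c j * x j)) with hsdef
            have hs : 0 ≤ s := le_of_lt (div_pos hnum hSpos)
            have hfeas : ∀ i : Fin m, (∑ j, a i j * (xb j + s * x j)) + b i ≥ 0 := by
              intro i
              have hsplit : ∑ j, a i j * (xb j + s * x j)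
                  = (∑ j, a i j * xb j) + s * ∑ j, a i j * x j := by
                rw [Finset.mul_sum, ← Finset.sum_add_distrib]
                exact Finset.sum_congr rfl fun j _ => by ring
              rw [hsplit]
              have h8 := hxb i
              have h9 := mul_nonneg hs (hdir i)
              linarith
            have h10 := hent _ hfeas
            have hsplit : ∑ j, c j * (xb j + s * x j)
                = (∑ j, c j * xb j) + s * ∑ j, c j * x j := by
              rw [Finset.mul_sum, ← Finset.sum_add_distrib]
              exact Finset.sum_congr rfl fun j _ => by ring
            rw [hsplit] at h10
            have hs' : s * ∑ j, c j * x j = -((∑ j, c j * xb j) + d + 1) := by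
              calc s * ∑ j, c j * x j
                  = -(((∑ j, c j * xb j) + d + 1) / (-(∑ j, c j * x j))
                      * (-(∑ j, c j * x j))) := by rw [hsdef]; ring
                _ = -((∑ j, c j * xb j) + d + 1) := by rw [div_mul_cancel₀ _ hS]
            rw [hs'] at h10
            linarith
          rw [ht0']
          simpa using hcx
      rw [hkdef, Fin.sum_univ_castSucc]
      simp only [Fin.snoc_castSucc, Fin.snoc_last]
      simp only [hxdef, htdef] at hgoal
      linarith [hgoal]
    obtain ⟨mu, hmu, hk⟩ := farkas_cone (m + 1) A k hhom
    refine ⟨fun i => mu i.castSucc, fun i => hmu _, ?_, fun j => ?_⟩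
    · have h := hk (Fin.last n)
      rw [hkdef, hAdef, Fin.sum_univ_castSucc] at h
      simp only [Fin.snoc_last, Fin.snoc_castSucc] at h
      rw [h]
      have hlast := hmu (Fin.last m)
      have : (0:ℚ) ≤ mu (Fin.last m) * 1 := by linarith
      linarith
    · have h := hk j.castSucc
      rw [hkdef, hAdef, Fin.sum_univ_castSucc] at h
      simp only [Fin.snoc_castSucc, Fin.snoc_last, Pi.zero_apply] at h
      rw [h]
      ring
  · rintro ⟨lam, hlam, hd, hc⟩ x hx
    have h1 : ∑ j, c j * x j = ∑ i, lam i * ∑ j, a i j * x j := by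
      calc ∑ j, c j * x j = ∑ j, (∑ i, lam i * a i j) * x j :=
            Finset.sum_congr rfl fun j _ => by rw [hc j]
        _ = ∑ j, ∑ i, lam i * a i j * x j :=
            Finset.sum_congr rfl fun j _ => by rw [Finset.sum_mul]
        _ = ∑ i, ∑ j, lam i * a i j * x j := Finset.sum_comm
        _ = ∑ i, lam i * ∑ j, a i j * x j :=
            Finset.sum_congr rfl fun i _ => by
              rw [Finset.mul_sum]; exact Finset.sum_congr rfl fun j _ => by ring
    have h2 : 0 ≤ ∑ i, lam i * ((∑ j, a i j * x j) + b i) :=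
      Finset.sum_nonneg fun i _ => mul_nonneg (hlam i) (hx i)
    have h3 : ∑ i, lam i * ((∑ j, a i j * x j) + b i)
        = (∑ i, lam i * ∑ j, a i j * x j) + ∑ i, lam i * b i := by
      rw [← Finset.sum_add_distrib]
      exact Finset.sum_congr rfl fun i _ => by ring
    rw [ge_iff_le, h1]
    rw [h3] at h2
    linarith
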